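/- In R(E6) ⊂ I_{1,6}, let W_e be the group generated by the reflections in the roots e_1 - e_2 and e_2 - e_3 (a sub-root-system of type A_2). Then the action of W_e on the 72 roots has exactly 31 orbits. -/

import Mathlib

/-- The intersection form on the lattice I_{1,6} = ℤ^7: diag(1,-1,-1,-1,-1,-1,-1). -/
def Ip (x y : Fin 7 → ℤ) : ℤ := x 0 * y 0 - ∑ i : Fin 6, x i.succ * y i.succ

/-- The hyperplane class h = 3e₀ - e₁ - ⋯ - e₆. -/
def hcl : Fin 7 → ℤ := ![3, -1, -1, -1, -1, -1, -1]

/-- The standard basis vector e_i of I_{1,6}. -/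
def ee (i : Fin 7) : Fin 7 → ℤ := fun j => if j = i then 1 else 0

/-- The 72 roots. -/
def Rset : Set (Fin 7 → ℤ) := {α | Ip α α = -2 ∧ Ip α hcl = 0}

/-- The reflection s_a(β) = β + (a·β)a. -/
def pl (a β : Fin 7 → ℤ) : Fin 7 → ℤ := β + Ip a β • a

/-- Reflection in the root e₁ - e₂. -/
def r1 : (Fin 7 → ℤ) → (Fin 7 → ℤ) := pl (ee 1 - ee 2)

/-- Reflection in the root e₂ - e₃. -/
def r2 : (Fin 7 → ℤ) → (Fin 7 → ℤ) := pl (ee 2 - ee 3)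

/- ### Auxiliary material -/

lemma s0 : (Fin.succ 0 : Fin 7) = 1 := rfl
lemma s1 : (Fin.succ 1 : Fin 7) = 2 := rfl
lemma s2 : (Fin.succ 2 : Fin 7) = 3 := rfl
lemma s3 : (Fin.succ 3 : Fin 7) = 4 := rfl
lemma s4 : (Fin.succ 4 : Fin 7) = 5 := rfl
lemma s5 : (Fin.succ 5 : Fin 7) = 6 := rfl
lemma hc0 : hcl 0 = 3 := rfl
lemma hc1 : hcl 1 = -1 := rfl
lemma hc2 : hcl 2 = -1 := rfl
lemma hc3 : hcl 3 = -1 := rfl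
lemma hc4 : hcl 4 = -1 := rfl
lemma hc5 : hcl 5 = -1 := rfl
lemma hc6 : hcl 6 = -1 := rfl

lemma r1_apply (β : Fin 7 → ℤ) : r1 β = ![β 0, β 2, β 1, β 3, β 4, β 5, β 6] := by
  funext j
  fin_cases j <;>
    simp (config := { decide := true }) [r1, pl, Ip, ee, Fin.sum_univ_six, s2, s3, s4, s5] <;>
    first | rfl | ring

lemma r2_apply (β : Fin 7 → ℤ) : r2 β = ![β 0, β 1, β 3, β 2, β 4, β 5, β 6] := by
  funext j
  fin_cases j <;>
    simp (config := { decide := true }) [r2, pl, Ip, ee, Fin.sum_univ_six, s2, s3, s4, s5] <;>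
    first | rfl | ring

lemma Ip_expand (x : Fin 7 → ℤ) : Ip x x =
    x 0 * x 0 - (x 1 * x 1 + x 2 * x 2 + x 3 * x 3 + x 4 * x 4 + x 5 * x 5 + x 6 * x 6) := by
  simp [Ip, Fin.sum_univ_six, s0, s1, s2, s3, s4, s5]

lemma Ip_hcl (x : Fin 7 → ℤ) : Ip x hcl =
    3 * x 0 + (x 1 + x 2 + x 3 + x 4 + x 5 + x 6) := by
  simp only [Ip, Fin.sum_univ_six, s0, s1, s2, s3, s4, s5, hc0, hc1, hc2, hc3, hc4, hc5, hc6]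
  ring

lemma int_abs_le (a : ℤ) (h : a*a ≤ 6) : -2 ≤ a ∧ a ≤ 2 := by
  constructor <;> nlinarith

lemma bounds (α : Fin 7 → ℤ) (h : α ∈ Rset) :
    (-2 ≤ α 0 ∧ α 0 ≤ 2) ∧ (-2 ≤ α 1 ∧ α 1 ≤ 2) ∧ (-2 ≤ α 2 ∧ α 2 ≤ 2) ∧
    (-2 ≤ α 3 ∧ α 3 ≤ 2) ∧ (-2 ≤ α 4 ∧ α 4 ≤ 2) ∧ (-2 ≤ α 5 ∧ α 5 ≤ 2) ∧
    (-2 ≤ α 6 ∧ α 6 ≤ 2) := by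
  obtain ⟨hq, hl⟩ := h
  rw [Ip_expand] at hq
  rw [Ip_hcl] at hl
  set a0 := α 0; set a1 := α 1; set a2 := α 2; set a3 := α 3
  set a4 := α 4; set a5 := α 5; set a6 := α 6
  have e : 6*(a1*a1+a2*a2+a3*a3+a4*a4+a5*a5+a6*a6) - (a1+a2+a3+a4+a5+a6)^2 =
      (a1-a2)^2+(a1-a3)^2+(a1-a4)^2+(a1-a5)^2+(a1-a6)^2+(a2-a3)^2+(a2-a4)^2+(a2-a5)^2
      +(a2-a6)^2+(a3-a4)^2+(a3-a5)^2+(a3-a6)^2+(a4-a5)^2+(a4-a6)^2+(a5-a6)^2 := by ring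
  have hnn : (0:ℤ) ≤ (a1-a2)^2+(a1-a3)^2+(a1-a4)^2+(a1-a5)^2+(a1-a6)^2+(a2-a3)^2+(a2-a4)^2
      +(a2-a5)^2+(a2-a6)^2+(a3-a4)^2+(a3-a5)^2+(a3-a6)^2+(a4-a5)^2+(a4-a6)^2+(a5-a6)^2 := by
    positivity
  have h9 : (a1+a2+a3+a4+a5+a6)^2 = 9*(a0*a0) := by
    have hs : a1+a2+a3+a4+a5+a6 = -3*a0 := by linarith
    rw [hs]; ring
  have key : a0 * a0 ≤ 4 := by linarith
  have n1 := mul_self_nonneg a1; have n2 := mul_self_nonneg a2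
  have n3 := mul_self_nonneg a3; have n4 := mul_self_nonneg a4
  have n5 := mul_self_nonneg a5; have n6 := mul_self_nonneg a6
  have n0 := mul_self_nonneg a0
  have q0 : a0*a0 ≤ 6 := by linarith
  have q1 : a1*a1 ≤ 6 := by linarith
  have q2 : a2*a2 ≤ 6 := by linarith
  have q3 : a3*a3 ≤ 6 := by linarith
  have q4 : a4*a4 ≤ 6 := by linarith
  have q5 : a5*a5 ≤ 6 := by linarith
  have q6 : a6*a6 ≤ 6 := by linarith
  exact ⟨int_abs_le _ q0, int_abs_le _ q1, int_abs_le _ q2, int_abs_le _ q3,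
    int_abs_le _ q4, int_abs_le _ q5, int_abs_le _ q6⟩

/-- The 72 roots, shifted by 2 so that all entries are in {0,...,4} ⊂ ℕ. -/
def RLn : List (ℕ×ℕ×ℕ×ℕ×ℕ×ℕ×ℕ) := [
(0, 3, 3, 3, 3, 3, 3),
(1, 2, 2, 2, 3, 3, 3),
(1, 2, 2, 3, 2, 3, 3),
(1, 2, 2, 3, 3, 2, 3),
(1, 2, 2, 3, 3, 3, 2),
(1, 2, 3, 2, 2, 3, 3),
(1, 2, 3, 2, 3, 2, 3),
(1, 2, 3, 2, 3, 3, 2),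
(1, 2, 3, 3, 2, 2, 3),
(1, 2, 3, 3, 2, 3, 2),
(1, 2, 3, 3, 3, 2, 2),
(1, 3, 2, 2, 2, 3, 3),
(1, 3, 2, 2, 3, 2, 3),
(1, 3, 2, 2, 3, 3, 2),
(1, 3, 2, 3, 2, 2, 3),
(1, 3, 2, 3, 2, 3, 2),
(1, 3, 2, 3, 3, 2, 2),
(1, 3, 3, 2, 2, 2, 3),
(1, 3, 3, 2, 2, 3, 2),
(1, 3, 3, 2, 3, 2, 2),
(1, 3, 3, 3, 2, 2, 2),
(2, 1, 2, 2, 2, 2, 3),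
(2, 1, 2, 2, 2, 3, 2),
(2, 1, 2, 2, 3, 2, 2),
(2, 1, 2, 3, 2, 2, 2),
(2, 1, 3, 2, 2, 2, 2),
(2, 2, 1, 2, 2, 2, 3),
(2, 2, 1, 2, 2, 3, 2),
(2, 2, 1, 2, 3, 2, 2),
(2, 2, 1, 3, 2, 2, 2),
(2, 2, 2, 1, 2, 2, 3),
(2, 2, 2, 1, 2, 3, 2),
(2, 2, 2, 1, 3, 2, 2),
(2, 2, 2, 2, 1, 2, 3),
(2, 2, 2, 2, 1, 3, 2),
(2, 2, 2, 2, 2, 1, 3),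
(2, 2, 2, 2, 2, 3, 1),
(2, 2, 2, 2, 3, 1, 2),
(2, 2, 2, 2, 3, 2, 1),
(2, 2, 2, 3, 1, 2, 2),
(2, 2, 2, 3, 2, 1, 2),
(2, 2, 2, 3, 2, 2, 1),
(2, 2, 3, 1, 2, 2, 2),
(2, 2, 3, 2, 1, 2, 2),
(2, 2, 3, 2, 2, 1, 2),
(2, 2, 3, 2, 2, 2, 1),
(2, 3, 1, 2, 2, 2, 2),
(2, 3, 2, 1, 2, 2, 2),
(2, 3, 2, 2, 1, 2, 2),
(2, 3, 2, 2, 2, 1, 2),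
(2, 3, 2, 2, 2, 2, 1),
(3, 1, 1, 1, 2, 2, 2),
(3, 1, 1, 2, 1, 2, 2),
(3, 1, 1, 2, 2, 1, 2),
(3, 1, 1, 2, 2, 2, 1),
(3, 1, 2, 1, 1, 2, 2),
(3, 1, 2, 1, 2, 1, 2),
(3, 1, 2, 1, 2, 2, 1),
(3, 1, 2, 2, 1, 1, 2),
(3, 1, 2, 2, 1, 2, 1),
(3, 1, 2, 2, 2, 1, 1),
(3, 2, 1, 1, 1, 2, 2),
(3, 2, 1, 1, 2, 1, 2),
(3, 2, 1, 1, 2, 2, 1),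
(3, 2, 1, 2, 1, 1, 2),
(3, 2, 1, 2, 1, 2, 1),
(3, 2, 1, 2, 2, 1, 1),
(3, 2, 2, 1, 1, 1, 2),
(3, 2, 2, 1, 1, 2, 1),
(3, 2, 2, 1, 2, 1, 1),
(3, 2, 2, 2, 1, 1, 1),
(4, 1, 1, 1, 1, 1, 1)]

def chk (a b c d e f g : ℕ) : Bool :=
  !(3*a+b+c+d+e+f+g == 18 && a*a+4*(b+c+d+e+f+g) == b*b+c*c+d*d+e*e+f*f+g*g+4*a+18)
  || RLn.contains (a,b,c,d,e,f,g)

set_option maxRecDepth 10000 in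
set_option maxHeartbeats 8000000 in
lemma fwdb : ((List.range 5).all fun a => (List.range 5).all fun b =>
    (List.range 5).all fun c => (List.range 5).all fun d => (List.range 5).all fun e =>
    (List.range 5).all fun f => (List.range 5).all fun g => chk a b c d e f g) = true := by
  decide

lemma fwd_mem (a b c d e f g : ℕ) (ha : a < 5) (hb : b < 5) (hc : c < 5) (hd : d < 5)
    (he : e < 5) (hf : f < 5) (hg : g < 5)
    (h1 : 3*a+b+c+d+e+f+g = 18)
    (h2 : a*a+4*(b+c+d+e+f+g) = b*b+c*c+d*d+e*e+f*f+g*g+4*a+18) :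
    (a,b,c,d,e,f,g) ∈ RLn := by
  have H := fwdb
  simp only [List.all_eq_true, List.mem_range] at H
  have H2 := H a ha b hb c hc d hd e he f hf g hg
  simp only [chk, h1, h2, beq_self_eq_true, Bool.and_self, Bool.not_true, Bool.false_or,
    List.contains_iff_mem] at H2
  exact H2

/-- The 72 roots as vectors. -/
def RL : List (Fin 7 → ℤ) := [
![-2, 1, 1, 1, 1, 1, 1],
![-1, 0, 0, 0, 1, 1, 1],
![-1, 0, 0, 1, 0, 1, 1],
![-1, 0, 0, 1, 1, 0, 1],
![-1, 0, 0, 1, 1, 1, 0],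
![-1, 0, 1, 0, 0, 1, 1],
![-1, 0, 1, 0, 1, 0, 1],
![-1, 0, 1, 0, 1, 1, 0],
![-1, 0, 1, 1, 0, 0, 1],
![-1, 0, 1, 1, 0, 1, 0],
![-1, 0, 1, 1, 1, 0, 0],
![-1, 1, 0, 0, 0, 1, 1],
![-1, 1, 0, 0, 1, 0, 1],
![-1, 1, 0, 0, 1, 1, 0],
![-1, 1, 0, 1, 0, 0, 1],
![-1, 1, 0, 1, 0, 1, 0],
![-1, 1, 0, 1, 1, 0, 0],
![-1, 1, 1, 0, 0, 0, 1],
![-1, 1, 1, 0, 0, 1, 0],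
![-1, 1, 1, 0, 1, 0, 0],
![-1, 1, 1, 1, 0, 0, 0],
![0, -1, 0, 0, 0, 0, 1],
![0, -1, 0, 0, 0, 1, 0],
![0, -1, 0, 0, 1, 0, 0],
![0, -1, 0, 1, 0, 0, 0],
![0, -1, 1, 0, 0, 0, 0],
![0, 0, -1, 0, 0, 0, 1],
![0, 0, -1, 0, 0, 1, 0],
![0, 0, -1, 0, 1, 0, 0],
![0, 0, -1, 1, 0, 0, 0],
![0, 0, 0, -1, 0, 0, 1],
![0, 0, 0, -1, 0, 1, 0],
![0, 0, 0, -1, 1, 0, 0],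
![0, 0, 0, 0, -1, 0, 1],
![0, 0, 0, 0, -1, 1, 0],
![0, 0, 0, 0, 0, -1, 1],
![0, 0, 0, 0, 0, 1, -1],
![0, 0, 0, 0, 1, -1, 0],
![0, 0, 0, 0, 1, 0, -1],
![0, 0, 0, 1, -1, 0, 0],
![0, 0, 0, 1, 0, -1, 0],
![0, 0, 0, 1, 0, 0, -1],
![0, 0, 1, -1, 0, 0, 0],
![0, 0, 1, 0, -1, 0, 0],
![0, 0, 1, 0, 0, -1, 0],
![0, 0, 1, 0, 0, 0, -1],
![0, 1, -1, 0, 0, 0, 0],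
![0, 1, 0, -1, 0, 0, 0],
![0, 1, 0, 0, -1, 0, 0],
![0, 1, 0, 0, 0, -1, 0],
![0, 1, 0, 0, 0, 0, -1],
![1, -1, -1, -1, 0, 0, 0],
![1, -1, -1, 0, -1, 0, 0],
![1, -1, -1, 0, 0, -1, 0],
![1, -1, -1, 0, 0, 0, -1],
![1, -1, 0, -1, -1, 0, 0],
![1, -1, 0, -1, 0, -1, 0],
![1, -1, 0, -1, 0, 0, -1],
![1, -1, 0, 0, -1, -1, 0],
![1, -1, 0, 0, -1, 0, -1],
![1, -1, 0, 0, 0, -1, -1],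
![1, 0, -1, -1, -1, 0, 0],
![1, 0, -1, -1, 0, -1, 0],
![1, 0, -1, -1, 0, 0, -1],
![1, 0, -1, 0, -1, -1, 0],
![1, 0, -1, 0, -1, 0, -1],
![1, 0, -1, 0, 0, -1, -1],
![1, 0, 0, -1, -1, -1, 0],
![1, 0, 0, -1, -1, 0, -1],
![1, 0, 0, -1, 0, -1, -1],
![1, 0, 0, 0, -1, -1, -1],
![2, -1, -1, -1, -1, -1, -1]]

def tvec (t : ℕ×ℕ×ℕ×ℕ×ℕ×ℕ×ℕ) : Fin 7 → ℤ :=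
  ![(t.1:ℤ)-2, (t.2.1:ℤ)-2, (t.2.2.1:ℤ)-2, (t.2.2.2.1:ℤ)-2, (t.2.2.2.2.1:ℤ)-2,
    (t.2.2.2.2.2.1:ℤ)-2, (t.2.2.2.2.2.2:ℤ)-2]

set_option maxRecDepth 10000 in
set_option maxHeartbeats 1600000 in
lemma br : ∀ t ∈ RLn, tvec t ∈ RL := by decide

set_option maxRecDepth 10000 in
set_option maxHeartbeats 1600000 in
lemma rev : ∀ x ∈ RL, Ip x x = -2 ∧ Ip x hcl = 0 := by decide

lemma Rset_eq : Rset = {α | α ∈ RL} := by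
  ext α
  constructor
  · intro h
    obtain ⟨⟨b0l, b0u⟩, ⟨b1l, b1u⟩, ⟨b2l, b2u⟩, ⟨b3l, b3u⟩, ⟨b4l, b4u⟩, ⟨b5l, b5u⟩,
      ⟨b6l, b6u⟩⟩ := bounds α h
    obtain ⟨hq, hl⟩ := h
    rw [Ip_expand] at hq
    rw [Ip_hcl] at hl
    set n0 := (α 0 + 2).toNat with hn0
    set n1 := (α 1 + 2).toNat with hn1
    set n2 := (α 2 + 2).toNat with hn2
    set n3 := (α 3 + 2).toNat with hn3
    set n4 := (α 4 + 2).toNat with hn4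
    set n5 := (α 5 + 2).toNat with hn5
    set n6 := (α 6 + 2).toNat with hn6
    have c0 : (n0 : ℤ) = α 0 + 2 := Int.toNat_of_nonneg (by linarith)
    have c1 : (n1 : ℤ) = α 1 + 2 := Int.toNat_of_nonneg (by linarith)
    have c2 : (n2 : ℤ) = α 2 + 2 := Int.toNat_of_nonneg (by linarith)
    have c3 : (n3 : ℤ) = α 3 + 2 := Int.toNat_of_nonneg (by linarith)
    have c4 : (n4 : ℤ) = α 4 + 2 := Int.toNat_of_nonneg (by linarith)
    have c5 : (n5 : ℤ) = α 5 + 2 := Int.toNat_of_nonneg (by linarith)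
    have c6 : (n6 : ℤ) = α 6 + 2 := Int.toNat_of_nonneg (by linarith)
    have l0 : n0 < 5 := by omega
    have l1 : n1 < 5 := by omega
    have l2 : n2 < 5 := by omega
    have l3 : n3 < 5 := by omega
    have l4 : n4 < 5 := by omega
    have l5 : n5 < 5 := by omega
    have l6 : n6 < 5 := by omega
    have e1 : 3*n0+n1+n2+n3+n4+n5+n6 = 18 := by omega
    have e2 : n0*n0+4*(n1+n2+n3+n4+n5+n6) = n1*n1+n2*n2+n3*n3+n4*n4+n5*n5+n6*n6+4*n0+18 := by
      have : (n0:ℤ)*n0+4*((n1:ℤ)+n2+n3+n4+n5+n6)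
          = (n1:ℤ)*n1+(n2:ℤ)*n2+(n3:ℤ)*n3+(n4:ℤ)*n4+(n5:ℤ)*n5+(n6:ℤ)*n6+4*(n0:ℤ)+18 := by
        rw [c0, c1, c2, c3, c4, c5, c6]; linear_combination hq
      exact_mod_cast this
    have hmem : (n0, n1, n2, n3, n4, n5, n6) ∈ RLn :=
      fwd_mem n0 n1 n2 n3 n4 n5 n6 l0 l1 l2 l3 l4 l5 l6 e1 e2
    have hα : α = tvec (n0, n1, n2, n3, n4, n5, n6) := by
      have d0 : ((n0:ℤ) - 2) = α 0 := by omega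
      have d1 : ((n1:ℤ) - 2) = α 1 := by omega
      have d2 : ((n2:ℤ) - 2) = α 2 := by omega
      have d3 : ((n3:ℤ) - 2) = α 3 := by omega
      have d4 : ((n4:ℤ) - 2) = α 4 := by omega
      have d5 : ((n5:ℤ) - 2) = α 5 := by omega
      have d6 : ((n6:ℤ) - 2) = α 6 := by omega
      funext j
      fin_cases j <;> simp [tvec, d0, d1, d2, d3, d4, d5, d6] <;> rfl
    rw [hα]
    exact br _ hmem
  · intro h
    exact rev α h

/-- The orbit of α as a Finset. -/
def oF (α : Fin 7 → ℤ) : Finset (Fin 7 → ℤ) :=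
  {α, r1 α, r2 α, r1 (r2 α), r2 (r1 α), r1 (r2 (r1 α))}

set_option maxRecDepth 10000 in
set_option maxHeartbeats 4000000 in
lemma cnt : (RL.toFinset.image oF).card = 31 := by decide

lemma oF_coe (α : Fin 7 → ℤ) : (↑(oF α) : Set (Fin 7 → ℤ)) =
    {α, r1 α, r2 α, r1 (r2 α), r2 (r1 α), r1 (r2 (r1 α))} := by
  simp [oF]

/-- W_e = ⟨r1, r2⟩ for the A₂ sub-root-system spanned by e₁ - e₂ and e₂ - e₃ is the
symmetric group S₃ = {1, r1, r2, r1r2, r2r1, r1r2r1} (the braid relation holds), so the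
W_e-orbit of α is {α, r1 α, r2 α, r1(r2 α), r2(r1 α), r1(r2(r1 α))}. The action of W_e on
the 72 roots has exactly 31 orbits. -/
theorem A2_orbits :
    (∀ β, r1 (r1 β) = β) ∧ (∀ β, r2 (r2 β) = β) ∧
    (∀ β, r1 (r2 (r1 β)) = r2 (r1 (r2 β))) ∧
    {S : Set (Fin 7 → ℤ) | ∃ α ∈ Rset,
        S = {α, r1 α, r2 α, r1 (r2 α), r2 (r1 α), r1 (r2 (r1 α))}}.ncard = 31 := by
  refine ⟨?_, ?_, ?_, ?_⟩
  · intro β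
    rw [r1_apply, r1_apply]
    funext j; fin_cases j <;> rfl
  · intro β
    rw [r2_apply, r2_apply]
    funext j; fin_cases j <;> rfl
  · intro β
    rw [r1_apply, r2_apply, r1_apply, r2_apply, r1_apply, r2_apply]
    funext j; fin_cases j <;> rfl
  · have hset : {S : Set (Fin 7 → ℤ) | ∃ α ∈ Rset,
        S = {α, r1 α, r2 α, r1 (r2 α), r2 (r1 α), r1 (r2 (r1 α))}} =
        (fun F : Finset (Fin 7 → ℤ) => (↑F : Set (Fin 7 → ℤ))) '' ↑(RL.toFinset.image oF) := by
      ext S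
      simp only [Set.mem_setOf_eq, Set.mem_image, Finset.coe_image, Set.mem_image,
        Finset.mem_coe, List.mem_toFinset, Rset_eq, Set.mem_setOf_eq]
      constructor
      · rintro ⟨α, hα, rfl⟩
        exact ⟨oF α, ⟨α, hα, rfl⟩, oF_coe α⟩
      · rintro ⟨F, ⟨α, hα, rfl⟩, rfl⟩
        exact ⟨α, hα, oF_coe α⟩
    rw [hset, Set.ncard_image_of_injective _ Finset.coe_injective, Set.ncard_coe_finset, cnt]
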